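/- Let R be a *-ring and let a ∈ R be both group invertible and Moore–Penrose invertible. Then a is an SEP element if and only if a(a#)*a⁺ is a right a-idempotent, i.e. (a(a#)*a⁺)² = a(a#)*a⁺ · a. -/
import Mathlib

theorem stmt_10 (R : Type*) [Ring R] [StarRing R] (a ap ag : R)
    (h1 : a * ap * a = a) (h2 : ap * a * ap = ap)
    (h3 : star (a * ap) = a * ap) (h4 : star (ap * a) = ap * a)
    (g1 : a * ag * a = a) (g2 : ag * a * ag = ag) (g3 : a * ag = ag * a) :
    (star a = ap ∧ ap = ag) ↔ (a * star ag * ap) * (a * star ag * ap) = (a * star ag * ap) * a := by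
  constructor
  · rintro ⟨h5, h6⟩
    subst h6; subst h5
    rw [star_star]
    have k : a * a * star a = a := by rw [mul_assoc, g3, ← mul_assoc, g1]
    rw [k]
  · intro hC
    have z0 : a*ap*a - a = 0 := sub_eq_zero_of_eq h1
    have z1 : ap*a*ap - ap = 0 := sub_eq_zero_of_eq h2
    have z2 : (star ap)*(star a) - a*ap = 0 := sub_eq_zero_of_eq (by rw [← star_mul]; exact h3)
    have z3 : (star a)*(star ap) - ap*a = 0 := sub_eq_zero_of_eq (by rw [← star_mul]; exact h4)
    have z4 : a*ag*a - a = 0 := sub_eq_zero_of_eq g1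
    have z5 : ag*a*ag - ag = 0 := sub_eq_zero_of_eq g2
    have z6 : a*ag - ag*a = 0 := sub_eq_zero_of_eq g3
    have z7 : (star a)*(star ap)*(star a) - (star a) = 0 := sub_eq_zero_of_eq (by simpa only [star_mul, mul_assoc] using congrArg star h1)
    have z8 : (star ap)*(star a)*(star ap) - (star ap) = 0 := sub_eq_zero_of_eq (by simpa only [star_mul, mul_assoc] using congrArg star h2)
    have z9 : (star a)*(star ag)*(star a) - (star a) = 0 := sub_eq_zero_of_eq (by simpa only [star_mul, mul_assoc] using congrArg star g1)
    have z10 : (star ag)*(star a)*(star ag) - (star ag) = 0 := sub_eq_zero_of_eq (by simpa only [star_mul, mul_assoc] using congrArg star g2)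
    have z11 : (star a)*(star ag) - (star ag)*(star a) = 0 := sub_eq_zero_of_eq (by simpa only [star_mul] using (congrArg star g3).symm)
    have z12 : a*(star ag)*ap*a*(star ag)*ap - a*(star ag)*ap*a = 0 := sub_eq_zero_of_eq (by simpa only [mul_assoc] using hC)
    have z13 : (star ap)*ag*(star a)*(star ap)*ag*(star a) - (star a)*(star ap)*ag*(star a) = 0 := sub_eq_zero_of_eq (by simpa only [star_mul, star_star, mul_assoc] using congrArg star hC)
    have key1 : ap - ag = 0
      - ((star ap)*ag*(star a)*(star ap)*ag*(star a) - (star a)*(star ap)*ag*(star a))*(star ap)*(star ap)*(star a)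
      - (star ap)*ag*(star a)*(star ap)*ag*((star a)*(star ag)*(star a) - (star a))*(star ap)*(star ap)*(star a)
      - (star ap)*ag*(star a)*(star ap)*ag*(star a)*((star a)*(star ag) - (star ag)*(star a))*(star ap)*(star ap)*(star a)
      + (star ap)*ag*(star a)*(star ap)*ag*(star a)*((star a)*(star ap) - ap*a)*(star a)*(star ag)*(star ap)*(star ap)*(star a)
      - (star ap)*ag*(star a)*(star ap)*ag*(star a)*ap*(a*(star ag)*ap*a*(star ag)*ap - a*(star ag)*ap*a)*a*ap
      - (star ap)*ag*(star a)*(star ap)*ag*(star a)*ap*a*(star ag)*((star a)*(star ap) - ap*a)*(star ag)*ap*a*ap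
      - (star ap)*ag*(star a)*(star ap)*ag*(star a)*ap*a*((star a)*(star ag) - (star ag)*(star a))*(star ap)*(star ag)*ap*a*ap
      + (star ap)*ag*(star a)*(star ap)*ag*(star a)*ap*a*(star ag)*((star a)*(star ap) - ap*a)*a*ap
      + (star ap)*ag*(star a)*(star ap)*ag*(star a)*ap*a*((star a)*(star ag) - (star ag)*(star a))*(star ap)*a*ap
      + (star ap)*ag*(star a)*(star ap)*ag*(star a)*ap*a*(star a)*(star ag)*(star ap)*(star ag)*(ap*a*ap - ap)
      + (star ap)*ag*(star a)*(star ap)*ag*(star a)*ap*a*(star a)*(star ag)*(star ap)*((star ap)*(star a) - a*ap)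
      + (star ap)*ag*(star a)*(star ap)*ag*(star a)*ap*(a*(star ag)*ap*a*(star ag)*ap - a*(star ag)*ap*a)
      + (star ap)*ag*(star a)*(star ap)*ag*(star a)*ap*a*(star ag)*((star a)*(star ap) - ap*a)*(star ag)*ap
      + (star ap)*ag*(star a)*(star ap)*ag*(star a)*ap*a*((star a)*(star ag) - (star ag)*(star a))*(star ap)*(star ag)*ap
      - (star ap)*ag*(star a)*(star ap)*ag*(star a)*ap*a*(star ag)*((star a)*(star ap) - ap*a)
      - (star ap)*ag*(star a)*(star ap)*ag*(star a)*ap*a*((star a)*(star ag) - (star ag)*(star a))*(star ap)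
      - (star ap)*ag*(star a)*(star ap)*ag*(star a)*((star a)*(star ap)*(star a) - (star a))*(star ag)*(star ap)*(star ap)*(star a)
      - (star ap)*ag*(star a)*(star ap)*ag*(star a)*((star a)*(star ap) - ap*a)*(star a)*(star ag)*(star ap)
      + (star ap)*ag*(star a)*(star ap)*ag*(star a)*((star a)*(star ap)*(star a) - (star a))*(star ag)*(star ap)
      + (star ap)*ag*(star a)*(star ap)*ag*((star a)*(star ag)*(star a) - (star a))*(star ap)
      + (star ap)*ag*(star a)*(star ap)*ag*(star a)*((star a)*(star ag) - (star ag)*(star a))*(star ap)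
      - ((star a)*(star ap) - ap*a)*ag*(star a)*(star ap)*(star ap)*(star a)
      - ap*(a*ag - ag*a)*ap*a*(star ap)*(star a)
      - ap*ag*(a*ap*a - a)*(star ap)*(star a)
      - ap*a*ag*((star a)*(star ap) - ap*a)*(star ap)*(star a)
      + ap*(a*ag - ag*a)*(star ap)*(star a)
      + ((star a)*(star ap) - ap*a)*ag*(star ap)*(star a)
      - (star a)*(star ap)*ag*((star ap)*(star a) - a*ap)
      - ((star a)*(star ap) - ap*a)*ag*a*ap
      - ap*(a*ag*a - a)*ap
      - (a*ag*a - a)*ap*(star ap)*ag*ag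
      - a*ag*((star ap)*(star a) - a*ap)*(star ap)*ag*ag
      + ((star ap)*(star a) - a*ap)*(star ap)*ag*ag
      + a*ag*((star ap)*ag*(star a)*(star ap)*ag*(star a) - (star a)*(star ap)*ag*(star a))*(star ap)
      - a*ag*(star ap)*ag*((star a)*(star ap) - ap*a)*ag*(star a)*(star ap)
      - a*ag*(star ap)*ag*ap*(a*ag - ag*a)*ap*a
      - a*ag*(star ap)*ag*ap*ag*(a*ap*a - a)
      - a*ag*(star ap)*ag*ap*a*ag*((star a)*(star ap) - ap*a)
      + a*ag*(star ap)*ag*ap*(a*ag - ag*a)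
      + a*ag*(star ap)*ag*((star a)*(star ap) - ap*a)*ag
      + a*ag*(star ap)*(ag*a*ag - ag)*(star a)*(star ap)*ag
      - a*ag*(star ap)*ag*(a*ag - ag*a)*ap*a*ag
      - a*ag*(star ap)*ag*ag*(a*ap*a - a)*ag
      - a*ag*(star ap)*ag*a*ag*((star a)*(star ap) - ap*a)*ag
      + a*ag*(star ap)*ag*(a*ag - ag*a)*ag
      - a*ag*(star ap)*(ag*a*ag - ag)*ag
      + a*ag*((star a)*(star ap) - ap*a)*ag*(star a)*(star ap)
      + a*ag*ap*(a*ag - ag*a)*ap*a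
      + a*ag*ap*ag*(a*ap*a - a)
      + a*ag*ap*a*ag*((star a)*(star ap) - ap*a)
      - a*ag*ap*(a*ag - ag*a)
      + a*ag*((star ap)*(star a)*(star ap) - (star ap))*ag*ag
      + (a*ag - ag*a)*ap*a*ag
      + ag*(a*ap*a - a)*ag
      - ((star ap)*(star a)*(star ap) - (star ap))*ag*ag
      + (ag*a*ag - ag)
      + (star ap)*ag*((star a)*(star ap) - ap*a)*ag*(star a)*(star ap)
      + (star ap)*ag*ap*(a*ag - ag*a)*ap*a
      + (star ap)*ag*ap*ag*(a*ap*a - a)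
      + (star ap)*ag*ap*a*ag*((star a)*(star ap) - ap*a)
      - (star ap)*ag*ap*(a*ag - ag*a)
      - (star ap)*ag*((star a)*(star ap) - ap*a)*ag
      - (star ap)*(ag*a*ag - ag)*(star a)*(star ap)*ag
      + (star ap)*ag*(a*ag - ag*a)*ap*a*ag
      + (star ap)*ag*ag*(a*ap*a - a)*ag
      + (star ap)*ag*a*ag*((star a)*(star ap) - ap*a)*ag
      - (star ap)*ag*(a*ag - ag*a)*ag
      + (star ap)*(ag*a*ag - ag)*ag
      - (ap*a*ap - ap) := by noncomm_ring
    simp only [z0, z1, z2, z3, z4, z5, z6, z7, z8, z9, z10, z11, z12, z13] at key1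
    simp only [mul_zero, zero_mul, add_zero, zero_add, sub_zero, zero_sub, neg_zero, neg_neg, mul_neg, neg_mul, sub_self, sub_neg_eq_add] at key1
    have hg : ap = ag := sub_eq_zero.mp key1
    subst hg
    refine ⟨?_, rfl⟩
    have w0 : a*ap*a - a = 0 := sub_eq_zero_of_eq h1
    have w1 : ap*a*ap - ap = 0 := sub_eq_zero_of_eq h2
    have w2 : (star ap)*(star a) - a*ap = 0 := sub_eq_zero_of_eq (by rw [← star_mul]; exact h3)
    have w3 : (star a)*(star ap) - ap*a = 0 := sub_eq_zero_of_eq (by rw [← star_mul]; exact h4)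
    have w4 : a*ap - ap*a = 0 := sub_eq_zero_of_eq g3
    have w5 : (star a)*(star ap)*(star a) - (star a) = 0 := sub_eq_zero_of_eq (by simpa only [star_mul, mul_assoc] using congrArg star h1)
    have w6 : (star ap)*(star a)*(star ap) - (star ap) = 0 := sub_eq_zero_of_eq (by simpa only [star_mul, mul_assoc] using congrArg star h2)
    have w7 : a*(star ap)*ap*a*(star ap)*ap - a*(star ap)*ap*a = 0 := sub_eq_zero_of_eq (by simpa only [mul_assoc] using hC)
    have key2 : star a - ap = 0
      + ((star a)*(star ap)*(star a) - (star a))*(star ap)*ap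
      - (star a)*(a*ap - ap*a)*(star ap)*ap
      + (star a)*((star a)*(star ap) - ap*a)*(star ap)*ap
      - (star a)*((star ap)*(star a) - a*ap)*(star ap)*ap
      - (star a)*(star a)*ap*(a*(star ap)*ap*a*(star ap)*ap - a*(star ap)*ap*a)
      - (star a)*(star a)*ap*a*(star ap)*((star a)*(star ap) - ap*a)*(star ap)*ap
      + (star a)*(star a)*ap*a*((star ap)*(star a)*(star ap) - (star ap))*(star ap)*ap
      + (star a)*(star a)*ap*a*(star ap)*((star a)*(star ap) - ap*a)
      - (star a)*(star a)*ap*a*((star ap)*(star a)*(star ap) - (star ap))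
      + (star a)*(star a)*((star ap)*(star a)*(star ap) - (star ap))*(star ap)*ap
      - (star a)*(star a)*(a*ap - ap*a)*(star ap)*(star ap)*ap
      - (star a)*(star a)*((star ap)*(star a) - a*ap)*(star ap)*(star ap)*ap
      - (star a)*(star a)*((star ap)*(star a)*(star ap) - (star ap))
      + (star a)*(star a)*(a*ap - ap*a)*(star ap)
      + (star a)*(star a)*((star ap)*(star a) - a*ap)*(star ap)
      + (ap*a*ap - ap)
      + ((star a)*(star ap) - ap*a)*ap
      - ((star a)*(star ap)*(star a) - (star a))
      + (star a)*(a*ap - ap*a)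
      - (star a)*((star a)*(star ap) - ap*a)
      + (star a)*((star ap)*(star a) - a*ap) := by noncomm_ring
    simp only [w0, w1, w2, w3, w4, w5, w6, w7] at key2
    simp only [mul_zero, zero_mul, add_zero, zero_add, sub_zero, zero_sub, neg_zero, neg_neg, mul_neg, neg_mul, sub_self, sub_neg_eq_add] at key2
    exact sub_eq_zero.mp key2
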